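/- For the q-state Potts model with q ≥ 2, d ≥ 3, m = e^B ≥ 1 and θ = 1/(e^β − 1) > 0: if v ≥ 1, or if v < 1 and m·F(v) > F(1), then every BP fixed point h ∈ Δ* takes at most two distinct coordinate values; more precisely there is a spin σ0 (with σ0 = 1 whenever m > 1) such that h_σ is the same for all σ ≠ σ0, with common value at most v. -/

import Mathlib

open Finset Filter MeasureTheory

noncomputable section

/-! ## Simplex, specifications, Bethe functional -/

/-- The simplex of probability vectors on `Fin q`. -/
def simplex (q : ℕ) : Set (Fin q → ℝ) :=
  {h | (∀ σ, 0 ≤ h σ) ∧ ∑ σ, h σ = 1}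

/-- `(ψ, ψ̄)` is a valid specification: `ψ` symmetric nonnegative, `ψ̄` positive. -/
def IsSpec {q : ℕ} (ψ : Fin q → Fin q → ℝ) (ψb : Fin q → ℝ) : Prop :=
  (∀ σ σ', ψ σ σ' = ψ σ' σ) ∧ (∀ σ σ', 0 ≤ ψ σ σ') ∧ ∀ σ, 0 < ψb σ

/-- Permissivity of the interaction `ψ`. -/
def Permissive {q : ℕ} (ψ : Fin q → Fin q → ℝ) : Prop :=
  ∃ σp, ∀ σ, 0 < ψ σ σp

/-- The belief propagation (Bethe) recursion. -/
def BPmap (q d : ℕ) (ψ : Fin q → Fin q → ℝ) (ψb : Fin q → ℝ) (h : Fin q → ℝ) :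
    Fin q → ℝ := fun σ =>
  ψb σ * (∑ σ', ψ σ σ' * h σ') ^ (d - 1) /
    ∑ τ, ψb τ * (∑ σ', ψ τ σ' * h σ') ^ (d - 1)

/-- The set `Δ*` of fixed points of the BP recursion in the simplex. -/
def bpFixedPts (q d : ℕ) (ψ : Fin q → Fin q → ℝ) (ψb : Fin q → ℝ) : Set (Fin q → ℝ) :=
  {h | h ∈ simplex q ∧ BPmap q d ψ ψb h = h}

/-- The Bethe free energy functional `Φ(h)`. -/
def PhiFun (q d : ℕ) (ψ : Fin q → Fin q → ℝ) (ψb : Fin q → ℝ) (h : Fin q → ℝ) : ℝ :=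
  Real.log (∑ σ, ψb σ * (∑ σ', ψ σ σ' * h σ') ^ d) -
    ((d : ℝ) / 2) * Real.log (∑ σ, ∑ σ', ψ σ σ' * h σ * h σ')

/-- The Bethe prediction `Φ = sup_{h ∈ Δ*} Φ(h)`. -/
def BetheP (q d : ℕ) (ψ : Fin q → Fin q → ℝ) (ψb : Fin q → ℝ) : ℝ :=
  sSup (PhiFun q d ψ ψb '' bpFixedPts q d ψ ψb)

/-! ## Edge simplex and edge Bethe functional -/

/-- Symmetric probability measures on `Fin q × Fin q`. -/
def edgeSimplex (q : ℕ) : Set (Fin q → Fin q → ℝ) :=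
  {h | (∀ σ σ', 0 ≤ h σ σ') ∧ (∀ σ σ', h σ σ' = h σ' σ) ∧ ∑ σ, ∑ σ', h σ σ' = 1}

/-- One-point marginal of an edge measure. -/
def marg (q : ℕ) (h : Fin q → Fin q → ℝ) : Fin q → ℝ := fun σ => ∑ σ', h σ σ'

/-- Shannon entropy of a measure on `Fin q`. -/
def ent1 (q : ℕ) (p : Fin q → ℝ) : ℝ := -∑ σ, p σ * Real.log (p σ)

/-- Shannon entropy of a measure on `Fin q × Fin q`. -/
def ent2 (q : ℕ) (h : Fin q → Fin q → ℝ) : ℝ := -∑ σ, ∑ σ', h σ σ' * Real.log (h σ σ')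

/-- The edge Bethe free energy functional `𝚽`. -/
def edgePhi (q d : ℕ) (ψ : Fin q → Fin q → ℝ) (ψb : Fin q → ℝ)
    (h : Fin q → Fin q → ℝ) : ℝ :=
  (∑ σ, marg q h σ * Real.log (ψb σ)) - ((d : ℝ) - 1) * ent1 q (marg q h) +
    ((d : ℝ) / 2) * ((∑ σ, ∑ σ', h σ σ' * Real.log (ψ σ σ')) + ent2 q h)

/-- The embedding `g ↦ g ⊗_ψ g` of the simplex into the edge simplex. -/
def tensorPsi (q : ℕ) (ψ : Fin q → Fin q → ℝ) (g : Fin q → ℝ) : Fin q → Fin q → ℝ :=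
  fun σ σ' => ψ σ σ' * g σ * g σ' / ∑ τ, ∑ τ', ψ τ τ' * g τ * g τ'

/-- All directional derivatives of `𝚽` within the edge simplex vanish at `h`. -/
def IsStationaryOn (q d : ℕ) (ψ : Fin q → Fin q → ℝ) (ψb : Fin q → ℝ)
    (h : Fin q → Fin q → ℝ) : Prop :=
  ∀ h' ∈ edgeSimplex q,
    deriv (fun η : ℝ =>
      edgePhi q d ψ ψb fun σ σ' => h σ σ' + η * (h' σ σ' - h σ σ')) 0 = 0

/-! ## Matchings (configuration model) -/

/-- A perfect matching of `Fin N`, encoded as a fixed-point-free involution. -/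
def IsMatching {N : ℕ} (m : Fin N → Fin N) : Prop :=
  Function.Involutive m ∧ ∀ i, m i ≠ i

instance {N : ℕ} : DecidablePred (IsMatching (N := N)) := fun m =>
  decidable_of_iff ((∀ i, m (m i) = i) ∧ ∀ i, m i ≠ i) Iff.rfl

/-- The set `M_{d,n}` of perfect matchings (here of `Fin N`). -/
abbrev Matchings (N : ℕ) := {m : Fin N → Fin N // IsMatching m}

/-- Representative modulo `n` of a half-edge label. -/
def bar (d n : ℕ) (i : Fin (d * n)) : Fin n :=
  ⟨i.1 % n, Nat.mod_lt _ (Nat.pos_of_ne_zero fun h => by subst h; simpa using i.2)⟩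

/-- Partition function of the factor model determined by a matching `γ ∈ M_{d,n}`. -/
def Zmatch (q d n : ℕ) (ψ : Fin q → Fin q → ℝ) (ψb : Fin q → ℝ)
    (γ : Matchings (d * n)) : ℝ :=
  ∑ σ : Fin n → Fin q,
    (∏ v, ψb (σ v)) *
      ∏ i ∈ univ.filter fun i => i < γ.1 i, ψ (σ (bar d n i)) (σ (bar d n (γ.1 i)))

/-- Expectation under the uniform measure on matchings (configuration model). -/
def Ecm (d n : ℕ) (f : Matchings (d * n) → ℝ) : ℝ :=
  (∑ γ : Matchings (d * n), f γ) / (Fintype.card (Matchings (d * n)) : ℝ)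

/-- The free energy `φ^cm_{d,n}` of the configuration model. -/
def phiCm (q d n : ℕ) (ψ : Fin q → Fin q → ℝ) (ψb : Fin q → ℝ) : ℝ :=
  (n : ℝ)⁻¹ * Ecm d n fun γ => Real.log (Zmatch q d n ψ ψb γ)

/-- Probability of an event under the uniform measure on matchings. -/
def Pcm (d n : ℕ) (p : Matchings (d * n) → Prop) : ℝ :=
  (Nat.card {γ : Matchings (d * n) // p γ} : ℝ) / (Fintype.card (Matchings (d * n)) : ℝ)

/-! ## Multigraphs via adjacency counts, tree-like vertices, `ζ_t` -/

/-- Degree in a multigraph given by adjacency counts (a self-loop counts twice,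
via the convention `A v v = 2 · #loops`). -/
def mgDeg {V : Type} [Fintype V] (A : V → V → ℕ) (u : V) : ℕ := ∑ w, A u w

/-- The simple graph underlying a multigraph (loops and multiplicities dropped). -/
def mgGraph {V : Type} (A : V → V → ℕ) : SimpleGraph V where
  Adj u w := u ≠ w ∧ (A u w ≠ 0 ∨ A w u ≠ 0)
  symm := ⟨fun u w h => ⟨h.1.symm, h.2.symm⟩⟩
  loopless := ⟨fun u h => h.1 rfl⟩

/-- The radius-`t` ball around `v`. -/
def mball {V : Type} [Fintype V] (A : V → V → ℕ) (v : V) (t : ℕ) : Finset V := by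
  classical exact univ.filter fun u => (mgGraph A).Reachable v u ∧ (mgGraph A).dist v u ≤ t

/-- `v` is `t`-tree-like: the radius-`t` ball around `v` is isomorphic to the depth-`t`
ball of the `d`-regular tree; concretely, every vertex at distance `< t` has degree `d`,
the ball carries no self-loops or multi-edges, and the (connected) ball has exactly
`|ball| - 1` edges, i.e. contains no cycle. -/
def treeLike (d : ℕ) {V : Type} [Fintype V] (A : V → V → ℕ) (t : ℕ) (v : V) : Prop :=
  (∀ u, (mgGraph A).Reachable v u → (mgGraph A).dist v u < t → mgDeg A u = d) ∧
  (∀ u ∈ mball A v t, A u u = 0) ∧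
  (∀ u ∈ mball A v t, ∀ w ∈ mball A v t, A u w ≤ 1) ∧
  (∑ u ∈ mball A v t, ∑ w ∈ mball A v t, A u w) = 2 * ((mball A v t).card - 1)

/-- Fraction `ζ_t` of vertices whose radius-`t` ball is not `d`-regular-tree-like. -/
def zeta (d : ℕ) {V : Type} [Fintype V] (A : V → V → ℕ) (t : ℕ) : ℝ :=
  (Nat.card {v : V // ¬ treeLike d A t v} : ℝ) / (Fintype.card V : ℝ)

/-- Adjacency counts of the multigraph `G[γ]` determined by a matching. -/
def matchAdj {d n : ℕ} (γ : Matchings (d * n)) (u w : Fin n) : ℕ :=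
  (univ.filter fun i : Fin (d * n) => bar d n i = u ∧ bar d n (γ.1 i) = w).card

/-- Adjacency counts of a simple graph. -/
def sgAdj {V : Type} [Fintype V] (G : SimpleGraph V) (u w : V) : ℕ := by
  classical exact if G.Adj u w then 1 else 0

/-! ## Partition functions of graphs and multigraphs -/

/-- The Gibbs weight of a configuration on a simple graph. -/
def graphWeight (q : ℕ) {V : Type} [Fintype V] [LinearOrder V] (ψ : Fin q → Fin q → ℝ)
    (ψb : Fin q → ℝ) (G : SimpleGraph V) (σ : V → Fin q) : ℝ := by
  classical exact
    (∏ v, ψb (σ v)) *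
      ∏ p ∈ univ.filter fun p : V × V => p.1 < p.2 ∧ G.Adj p.1 p.2, ψ (σ p.1) (σ p.2)

/-- Partition function of the factor model on a simple graph. -/
def ZG (q : ℕ) {V : Type} [Fintype V] [LinearOrder V] (ψ : Fin q → Fin q → ℝ)
    (ψb : Fin q → ℝ) (G : SimpleGraph V) : ℝ :=
  ∑ σ : V → Fin q, graphWeight q ψ ψb G σ

/-- The Gibbs weight of a configuration on a multigraph. -/
def mgWeight (q : ℕ) {V : Type} [Fintype V] [LinearOrder V] (ψ : Fin q → Fin q → ℝ)
    (ψb : Fin q → ℝ) (A : V → V → ℕ) (σ : V → Fin q) : ℝ :=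
  (∏ v, ψb (σ v)) *
    (∏ p ∈ univ.filter fun p : V × V => p.1 < p.2, ψ (σ p.1) (σ p.2) ^ A p.1 p.2) *
    ∏ v, ψ (σ v) (σ v) ^ (A v v / 2)

/-- Partition function of the factor model on a multigraph. -/
def Zmg (q : ℕ) {V : Type} [Fintype V] [LinearOrder V] (ψ : Fin q → Fin q → ℝ)
    (ψb : Fin q → ℝ) (A : V → V → ℕ) : ℝ :=
  ∑ σ : V → Fin q, mgWeight q ψ ψb A σ

/-- Remove a vertex from a multigraph (delete all incident edges). -/
def removeVx {V : Type} [DecidableEq V] (A : V → V → ℕ) (v : V) : V → V → ℕ :=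
  fun i j => if i = v ∨ j = v then 0 else A i j

/-- Law of the spins of the (enumerated) neighbors of `v` under the factor model
on the multigraph with `v` removed. -/
def nuMinus (q d N : ℕ) (ψ : Fin q → Fin q → ℝ) (ψb : Fin q → ℝ)
    (A : Fin N → Fin N → ℕ) (v : Fin N) (vs : Fin d → Fin N) (τ : Fin d → Fin q) : ℝ :=
  (∑ᶠ (σ : Fin N → Fin q) (_ : ∀ j, σ (vs j) = τ j), mgWeight q ψ ψb (removeVx A v) σ) /
    Zmg q ψ ψb (removeVx A v)

/-- Total variation distance of probability vectors. -/
def dTV {α : Type} [Fintype α] (p r : α → ℝ) : ℝ := (∑ x, |p x - r x|) / 2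

/-- The mixture `ρ̄` of product measures associated to a measure `ρ` on `Δ^d`. -/
def rhoBar (q d : ℕ) (ρ : Measure (Fin d → Fin q → ℝ)) (τ : Fin d → Fin q) : ℝ :=
  ∫ h, (∏ j, h j (τ j)) ∂ρ

/-- `x` lies in the (topological) support of the measure `ρ`. -/
def inSupp {α : Type*} [TopologicalSpace α] {m : MeasurableSpace α}
    (ρ : Measure α) (x : α) : Prop :=
  ∀ U : Set α, IsOpen U → x ∈ U → 0 < ρ U

/-- Symmetric multigraph adjacency data with an even number of half-loops. -/
def IsMultigraphAdj {V : Type} (A : V → V → ℕ) : Prop :=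
  (∀ u w, A u w = A w u) ∧ ∀ v, Even (A v v)

/-- `d`-regularity of a multigraph. -/
def IsRegAdj (d : ℕ) {V : Type} [Fintype V] (A : V → V → ℕ) : Prop :=
  ∀ v, mgDeg A v = d

/-! ## The functionals `Ψ^vx`, `Ψ^e`, `Ψ^{e,sym}`, `Ψ^sym` -/

def PsiVx (q d : ℕ) (ψ : Fin q → Fin q → ℝ) (ψb : Fin q → ℝ)
    (h : Fin d → Fin q → ℝ) : ℝ :=
  ∑ σ, ψb σ * ∏ j, ∑ σ', ψ σ σ' * h j σ'

def PsiE (q d : ℕ) (ψ : Fin q → Fin q → ℝ) (h : Fin d → Fin q → ℝ) : ℝ :=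
  ∏ j : Fin (d / 2),
    ∑ σ, ∑ σ', ψ σ σ' * h ⟨2 * j.1, by have := j.2; omega⟩ σ *
      h ⟨2 * j.1 + 1, by have := j.2; omega⟩ σ'

def PsiEsym (q d : ℕ) (ψ : Fin q → Fin q → ℝ) (h : Fin d → Fin q → ℝ) : ℝ :=
  (∑ π : Equiv.Perm (Fin d), PsiE q d ψ fun j => h (π j)) / (Nat.factorial d : ℝ)

def PsiSym (q d : ℕ) (ψ : Fin q → Fin q → ℝ) (ψb : Fin q → ℝ)
    (h : Fin d → Fin q → ℝ) : ℝ :=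
  PsiVx q d ψ ψb h / PsiEsym q d ψ h

/-! ## Potts model -/

/-- Potts pair interaction. -/
def pottsPsi (q : ℕ) (β : ℝ) : Fin q → Fin q → ℝ :=
  fun σ σ' => Real.exp (if σ = σ' then β else 0)

/-- Potts magnetic field (favoring the spin with index `0`). -/
def pottsPsib (q : ℕ) (B : ℝ) : Fin q → ℝ :=
  fun σ => Real.exp (if σ.1 = 0 then B else 0)

/-- The one-parameter family `h_b ∈ Δ̄` of biased measures. -/
def pottsHb (q : ℕ) (b : ℝ) : Fin q → ℝ :=
  fun σ => if σ.1 = 0 then (1 + ((q : ℝ) - 1) * b) / q else (1 - b) / q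

/-- The univariate Bethe recursion `bp` on the bias parameter `b`. -/
def pottsBp (q d : ℕ) (β B : ℝ) (b : ℝ) : ℝ :=
  ((q : ℝ) * (∑ σ ∈ univ.filter fun σ : Fin q => σ.1 = 0,
      BPmap q d (pottsPsi q β) (pottsPsib q B) (pottsHb q b) σ) - 1) / ((q : ℝ) - 1)

/-- `b_f`, the limit of the (monotone) BP iterates started from `b = 0`. -/
def bLo (q d : ℕ) (β B : ℝ) : ℝ := ⨆ t : ℕ, (pottsBp q d β B)^[t] 0

/-- `b_m`, the limit of the (monotone) BP iterates started from `b = 1`. -/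
def bHi (q d : ℕ) (β B : ℝ) : ℝ := ⨅ t : ℕ, (pottsBp q d β B)^[t] 1

/-- The function `F(x) = x⁻¹ (x/θ + 1)^{d-1}`. -/
def Fpotts (d : ℕ) (θ x : ℝ) : ℝ := x⁻¹ * (x / θ + 1) ^ (d - 1)

/-! ## Exchangeable pairs and the symmetric correlation coefficient -/

def eMean (q : ℕ) (h φ : Fin q → Fin q → ℝ) : ℝ := ∑ σ, ∑ σ', h σ σ' * φ σ σ'

def eVar (q : ℕ) (h φ : Fin q → Fin q → ℝ) : ℝ :=
  ∑ σ, ∑ σ', h σ σ' * (φ σ σ' - eMean q h φ) ^ 2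

def eCondVar (q : ℕ) (h φ : Fin q → Fin q → ℝ) : ℝ :=
  ∑ σ, marg q h σ * ((∑ σ', h σ σ' * φ σ σ') / marg q h σ - eMean q h φ) ^ 2

/-- The symmetric correlation coefficient `ρ_XY` of an exchangeable pair with law `h`. -/
def rhoXY (q : ℕ) (h : Fin q → Fin q → ℝ) : ℝ :=
  sSup {r | ∃ φ : Fin q → Fin q → ℝ, (∀ σ σ', φ σ σ' = φ σ' σ) ∧ 0 < eVar q h φ ∧
    r = eCondVar q h φ / eVar q h φ}

/-! ## Empirical measures, misc -/

/-- The edge empirical measure `L^e(σ, γ)`. -/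
def edgeEmp (q d n : ℕ) (γ : Matchings (d * n)) (σ : Fin n → Fin q) :
    Fin q → Fin q → ℝ :=
  fun τ τ' =>
    ((univ.filter fun i : Fin (d * n) =>
        σ (bar d n i) = τ ∧ σ (bar d n (γ.1 i)) = τ').card : ℝ) / ((n : ℝ) * d)

/-- The vertex empirical (spin) distribution `L^vx(σ)`. -/
def empDist (q n : ℕ) (σ : Fin n → Fin q) : Fin q → ℝ :=
  fun τ => (Nat.card {i : Fin n // σ i = τ} : ℝ) / n

/-- Probability of an event under a weight function. -/
def probOf {α : Type*} (P : α → ℝ) (p : α → Prop) : ℝ := ∑ᶠ (x : α) (_ : p x), P x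

/-- Probability of an event under the uniform measure on simple `d`-regular graphs. -/
def Preg (d n : ℕ) (p : SimpleGraph (Fin n) → Prop) : ℝ :=
  (Nat.card {G : SimpleGraph (Fin n) // (∀ v, mgDeg (sgAdj G) v = d) ∧ p G} : ℝ) /
    (Nat.card {G : SimpleGraph (Fin n) // ∀ v, mgDeg (sgAdj G) v = d} : ℝ)

/-- Adjoin to `G` one new vertex, adjacent to the vertices of `S`. -/
def addVertex (k : ℕ) (G : SimpleGraph (Fin k)) (S : Finset (Fin k)) :
    SimpleGraph (Fin (k + 1)) :=
  SimpleGraph.fromRel fun a b =>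
    (∃ u w : Fin k, a = u.castSucc ∧ b = w.castSucc ∧ G.Adj u w) ∨
      (a = Fin.last k ∧ ∃ w ∈ S, b = w.castSucc)

/-- Strict local maximizer of the edge Bethe functional on the edge simplex. -/
def strictLocalMaxOnEdge (q d : ℕ) (ψ : Fin q → Fin q → ℝ) (ψb : Fin q → ℝ)
    (H : Fin q → Fin q → ℝ) : Prop :=
  ∃ ε : ℝ, 0 < ε ∧ ∀ h' ∈ edgeSimplex q, h' ≠ H → dist h' H < ε →
    edgePhi q d ψ ψb h' < edgePhi q d ψ ψb H

/-- Strictly negative second variation of the edge Bethe functional at `H`, in every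
nonzero symmetric direction of total mass zero. -/
def negSecondVar (q d : ℕ) (ψ : Fin q → Fin q → ℝ) (ψb : Fin q → ℝ)
    (H : Fin q → Fin q → ℝ) : Prop :=
  ∀ δ : Fin q → Fin q → ℝ, δ ≠ 0 → (∀ σ σ', δ σ σ' = δ σ' σ) →
    (∑ σ, ∑ σ', δ σ σ') = 0 →
    iteratedDeriv 2 (fun η : ℝ => edgePhi q d ψ ψb fun σ σ' => H σ σ' + η * δ σ σ') 0 < 0

lemma fpotts_deriv (d : ℕ) (hd : 3 ≤ d) (θ : ℝ) (hθ : 0 < θ) (x : ℝ) (hx : 0 < x) :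
    HasDerivAt (Fpotts d θ)
      ((x / θ + 1) ^ (d - 2) * (x ^ 2)⁻¹ * (((d : ℝ) - 2) * x / θ - 1)) x := by
  have h1 : HasDerivAt (fun y : ℝ => y⁻¹) (-(x ^ 2)⁻¹) x := hasDerivAt_inv hx.ne'
  have h2 : HasDerivAt (fun y : ℝ => y / θ + 1) (1 / θ) x := by
    simpa using ((hasDerivAt_id x).div_const θ).add_const 1
  have h3 := h2.pow (d - 1)
  have h4 := h1.mul h3
  have : HasDerivAt (Fpotts d θ)
      (-(x ^ 2)⁻¹ * (x / θ + 1) ^ (d - 1) +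
        x⁻¹ * (((d : ℝ) - 1) * (x / θ + 1) ^ (d - 1 - 1) * (1 / θ))) x := by
    have hcast : ((d - 1 : ℕ) : ℝ) = (d : ℝ) - 1 := by
      have : 1 ≤ d := by omega
      push_cast [this]; ring
    rw [hcast] at h4; exact h4
  convert this using 1
  obtain ⟨e, rfl⟩ : ∃ e, d = e + 3 := ⟨d - 3, by omega⟩
  have h5 : e + 3 - 1 = (e + 1) + 1 := by omega
  have h6 : e + 3 - 2 = e + 1 := by omega
  have h7 : e + 3 - 1 - 1 = e + 1 := by omega
  rw [h7, h5, h6, pow_succ]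
  have hxne : x ≠ 0 := hx.ne'
  have hθne : θ ≠ 0 := hθ.ne'
  push_cast
  have hx2 : x * x⁻¹ = 1 := mul_inv_cancel₀ hxne
  linear_combination ((e : ℝ) + 2) * (x / θ + 1) ^ (e + 1) * θ⁻¹ * x⁻¹ * hx2

lemma fpotts_strictAntiOn (d : ℕ) (hd : 3 ≤ d) (θ : ℝ) (hθ : 0 < θ) :
    StrictAntiOn (Fpotts d θ) (Set.Ioc 0 (θ / ((d : ℝ) - 2))) := by
  have hd2 : (0:ℝ) < (d:ℝ) - 2 := by
    have : (3:ℝ) ≤ (d:ℝ) := by exact_mod_cast hd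
    linarith
  have hv : 0 < θ / ((d : ℝ) - 2) := div_pos hθ hd2
  apply strictAntiOn_of_deriv_neg (convex_Ioc _ _)
  · exact fun x hx => (fpotts_deriv d hd θ hθ x hx.1).continuousAt.continuousWithinAt
  · intro x hx
    rw [interior_Ioc] at hx
    have hx0 : 0 < x := hx.1
    rw [(fpotts_deriv d hd θ hθ x hx0).deriv]
    have hu : 0 < x / θ + 1 := by positivity
    have hneg : ((d : ℝ) - 2) * x / θ - 1 < 0 := by
      have : ((d : ℝ) - 2) * x < θ := by
        have := hx.2
        rw [lt_div_iff₀ hd2] at this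
        linarith [this]
      rw [sub_neg, div_lt_one hθ]
      exact this
    exact mul_neg_of_pos_of_neg (mul_pos (pow_pos hu _) (by positivity)) hneg

lemma fpotts_strictMonoOn (d : ℕ) (hd : 3 ≤ d) (θ : ℝ) (hθ : 0 < θ) :
    StrictMonoOn (Fpotts d θ) (Set.Ici (θ / ((d : ℝ) - 2))) := by
  have hd2 : (0:ℝ) < (d:ℝ) - 2 := by
    have : (3:ℝ) ≤ (d:ℝ) := by exact_mod_cast hd
    linarith
  have hv : 0 < θ / ((d : ℝ) - 2) := div_pos hθ hd2
  apply strictMonoOn_of_deriv_pos (convex_Ici _)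
  · exact fun x hx => (fpotts_deriv d hd θ hθ x (lt_of_lt_of_le hv hx)).continuousAt.continuousWithinAt
  · intro x hx
    rw [interior_Ici] at hx
    have hx0 : 0 < x := lt_trans hv hx
    rw [(fpotts_deriv d hd θ hθ x hx0).deriv]
    have hu : 0 < x / θ + 1 := by positivity
    have hpos : 0 < ((d : ℝ) - 2) * x / θ - 1 := by
      have : θ < ((d : ℝ) - 2) * x := by
        have h' : θ / ((d:ℝ)-2) < x := hx
        rw [div_lt_iff₀ hd2] at h'
        linarith
      rw [sub_pos, lt_div_iff₀ hθ]
      linarith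
    exact mul_pos (mul_pos (pow_pos hu _) (by positivity)) hpos

/-- if `v ≥ 1`, or `v < 1` and `m F(v) > F(1)`, then every Potts BP fixed
point takes at most two distinct values: all spins other than one distinguished spin `σ0`
(which is spin `1` when `m > 1`) share a common value at most `v`. -/
theorem potts_fixed_point_two_values
    (q d : ℕ) (hq : 2 ≤ q) (hd : 3 ≤ d) (β B : ℝ) (hβ : 0 < β) (hB : 0 ≤ B)
    (hcase : 1 ≤ (1 / (Real.exp β - 1)) / ((d : ℝ) - 2) ∨
      ((1 / (Real.exp β - 1)) / ((d : ℝ) - 2) < 1 ∧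
        Fpotts d (1 / (Real.exp β - 1)) 1 <
          Real.exp B *
            Fpotts d (1 / (Real.exp β - 1))
              ((1 / (Real.exp β - 1)) / ((d : ℝ) - 2)))) :
    ∀ h ∈ bpFixedPts q d (pottsPsi q β) (pottsPsib q B),
      ∃ σ0 : Fin q, (0 < B → σ0 = ⟨0, by omega⟩) ∧
        ∃ p : ℝ, p ≤ (1 / (Real.exp β - 1)) / ((d : ℝ) - 2) ∧
          ∀ σ : Fin q, σ ≠ σ0 → h σ = p := by
  intro h hh
  obtain ⟨⟨hpos0, hsum⟩, hfix⟩ := hh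
  have hc : 0 < Real.exp β - 1 := by
    have := Real.add_one_le_exp β; linarith
  set c : ℝ := Real.exp β - 1 with hc_def
  set θ : ℝ := 1 / c with hθ_def
  have hθ : 0 < θ := by positivity
  set v : ℝ := θ / ((d : ℝ) - 2) with hv_def
  have hd2 : (0:ℝ) < (d:ℝ) - 2 := by
    have : (3:ℝ) ≤ (d:ℝ) := by exact_mod_cast hd
    linarith
  have hv : 0 < v := div_pos hθ hd2
  -- the local sums
  have hS : ∀ σ : Fin q, (∑ σ', pottsPsi q β σ σ' * h σ') = c * h σ + 1 := by
    intro σ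
    have key : ∀ σ' : Fin q, pottsPsi q β σ σ' * h σ'
        = h σ' + (if σ = σ' then c * h σ' else 0) := by
      intro σ'
      simp only [pottsPsi]
      split_ifs with hss
      · rw [hc_def]; ring
      · simp [Real.exp_zero]
    rw [Finset.sum_congr rfl fun σ' _ => key σ', Finset.sum_add_distrib, hsum,
      Finset.sum_ite_eq]
    simp [add_comm]
  set Z : ℝ := ∑ τ, pottsPsib q B τ * (∑ σ', pottsPsi q β τ σ' * h σ') ^ (d - 1) with hZ_def
  have hZpos : 0 < Z := by
    rw [hZ_def]
    have : Nonempty (Fin q) := ⟨⟨0, by omega⟩⟩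
    apply Finset.sum_pos
    · intro τ _
      rw [hS τ]
      have h1 : 0 < c * h τ + 1 := by
        have := hpos0 τ; positivity
      exact mul_pos (Real.exp_pos _) (pow_pos h1 _)
    · exact Finset.univ_nonempty
  have heq : ∀ σ : Fin q, h σ = pottsPsib q B σ * (c * h σ + 1) ^ (d - 1) / Z := by
    intro σ
    have h0 := congrFun hfix σ
    rw [BPmap] at h0
    rw [hS σ] at h0
    exact h0.symm
  have hpos : ∀ σ, 0 < h σ := by
    intro σ
    rw [heq σ]
    have h1 : 0 < c * h σ + 1 := by have := hpos0 σ; positivity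
    exact div_pos (mul_pos (Real.exp_pos _) (pow_pos h1 _)) hZpos
  have hlt1 : ∀ σ, h σ < 1 := by
    intro σ
    obtain ⟨σ', hne⟩ : ∃ σ' : Fin q, σ' ≠ σ := by
      by_cases h0 : σ.1 = 0
      · exact ⟨⟨1, by omega⟩, fun hcon => by
          rw [Fin.ext_iff] at hcon; simp only [] at hcon; omega⟩
      · exact ⟨⟨0, by omega⟩, fun hcon => by
          rw [Fin.ext_iff] at hcon; simp only [] at hcon; omega⟩
    have hsub : ({σ, σ'} : Finset (Fin q)) ⊆ univ := subset_univ _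
    have h1 : h σ + h σ' ≤ ∑ τ, h τ := by
      rw [← Finset.sum_pair (Ne.symm hne)]
      exact Finset.sum_le_sum_of_subset_of_nonneg hsub fun i _ _ => hpos0 i
    rw [hsum] at h1
    linarith [hpos σ']
  have hFeq : ∀ σ : Fin q, pottsPsib q B σ * Fpotts d θ (h σ) = Z := by
    intro σ
    have h1 : h σ * Z = pottsPsib q B σ * (c * h σ + 1) ^ (d - 1) :=
      (eq_div_iff hZpos.ne').mp (heq σ)
    have hθeq : h σ / θ = c * h σ := by
      rw [hθ_def, one_div, div_eq_mul_inv, inv_inv, mul_comm]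
    rw [Fpotts, hθeq]
    calc pottsPsib q B σ * ((h σ)⁻¹ * (c * h σ + 1) ^ (d - 1))
        = (h σ)⁻¹ * (pottsPsib q B σ * (c * h σ + 1) ^ (d - 1)) := by ring
      _ = (h σ)⁻¹ * (h σ * Z) := by rw [h1]
      _ = Z := by field_simp [(hpos σ).ne']
  set σ0 : Fin q := ⟨0, by omega⟩ with hσ0_def
  have hψb1 : ∀ σ : Fin q, σ ≠ σ0 → pottsPsib q B σ = 1 := by
    intro σ hσ
    have : σ.1 ≠ 0 := fun h0 => hσ (Fin.ext h0)
    simp [pottsPsib, this]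
  have hFz : ∀ σ : Fin q, σ ≠ σ0 → Fpotts d θ (h σ) = Z := by
    intro σ hσ
    have := hFeq σ; rwa [hψb1 σ hσ, one_mul] at this
  have hFz0 : Real.exp B * Fpotts d θ (h σ0) = Z := by
    have := hFeq σ0
    simpa [pottsPsib, hσ0_def] using this
  have hanti := fpotts_strictAntiOn d hd θ hθ
  have hmono := fpotts_strictMonoOn d hd θ hθ
  -- every non-σ0 coordinate is ≤ v
  have hle : ∀ σ : Fin q, σ ≠ σ0 → h σ ≤ v := by
    intro σ hσ
    by_contra hgt
    push_neg at hgt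
    rcases hcase with h1 | ⟨h2, h3⟩
    · linarith [hlt1 σ]
    · have hub : Fpotts d θ (h σ) ≤ Fpotts d θ 1 :=
        (hmono (Set.mem_Ici.mpr hgt.le) (Set.mem_Ici.mpr (by linarith)) (hlt1 σ)).le
      have hlb : Fpotts d θ v ≤ Fpotts d θ (h σ0) := by
        rcases le_or_gt (h σ0) v with hcv | hcv
        · rcases eq_or_lt_of_le hcv with he | hlt
          · rw [he]
          · exact (hanti ⟨hpos σ0, hcv⟩ ⟨hv, le_refl v⟩ hlt).le
        · exact (hmono (Set.mem_Ici.mpr (le_refl v)) (Set.mem_Ici.mpr hcv.le) hcv).le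
      have hZlb : Fpotts d θ 1 < Z := by
        calc Fpotts d θ 1 < Real.exp B * Fpotts d θ v := h3
          _ ≤ Real.exp B * Fpotts d θ (h σ0) :=
            mul_le_mul_of_nonneg_left hlb (Real.exp_pos B).le
          _ = Z := hFz0
      have := hFz σ hσ
      linarith
  set σ1 : Fin q := ⟨1, by omega⟩ with hσ1_def
  have hne1 : σ1 ≠ σ0 := by
    intro hcon
    have : (1 : ℕ) = 0 := congrArg Fin.val hcon
    omega
  refine ⟨σ0, fun _ => rfl, h σ1, hle σ1 hne1, ?_⟩
  intro σ hσ
  have hm1 : h σ ∈ Set.Ioc 0 v := ⟨hpos σ, hle σ hσ⟩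
  have hm2 : h σ1 ∈ Set.Ioc 0 v := ⟨hpos σ1, hle σ1 hne1⟩
  exact hanti.injOn hm1 hm2 (by rw [hFz σ hσ, hFz σ1 hne1])

end
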